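/- Suppose 1/2 < v_w < 1, v_u = 1 - v_w, and 4 v_u v_w < R0 < 1. Then both roots r± = (1/(2 v_u)) (2 v_w - 1 ± sqrt(1 - 4 v_u v_w / R0)) of the equation (v_u/v_w) r^2 + (v_u/v_w - 1) r + (1 - R0)/R0 = 0 are real and strictly positive, and r+ > r-. -/

import Mathlib

lemma aux_roots (v_w R0 s : ℝ) (hv1 : 1 / 2 < v_w) (hv2 : v_w < 1)
    (hR1 : 4 * (1 - v_w) * v_w < R0) (hR2 : R0 < 1)
    (hs0 : 0 ≤ s) (hs2 : s ^ 2 = 1 - 4 * (1 - v_w) * v_w / R0) :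
    (((1 - v_w) / v_w) * ((1 / (2 * (1 - v_w))) * (2 * v_w - 1 + s)) ^ 2 +
      ((1 - v_w) / v_w - 1) * ((1 / (2 * (1 - v_w))) * (2 * v_w - 1 + s)) + (1 - R0) / R0 = 0) ∧
    (((1 - v_w) / v_w) * ((1 / (2 * (1 - v_w))) * (2 * v_w - 1 - s)) ^ 2 +
      ((1 - v_w) / v_w - 1) * ((1 / (2 * (1 - v_w))) * (2 * v_w - 1 - s)) + (1 - R0) / R0 = 0) ∧
    0 < (1 / (2 * (1 - v_w))) * (2 * v_w - 1 - s) ∧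
    0 < (1 / (2 * (1 - v_w))) * (2 * v_w - 1 + s) ∧
    (1 / (2 * (1 - v_w))) * (2 * v_w - 1 - s) < (1 / (2 * (1 - v_w))) * (2 * v_w - 1 + s) := by
  have hvu : 0 < 1 - v_w := by linarith
  have hvw : 0 < v_w := by linarith
  have hR0 : 0 < R0 := by nlinarith
  have key : s ^ 2 * R0 = R0 - 4 * (1 - v_w) * v_w := by
    rw [hs2]; field_simp
  have h1 : s ^ 2 < (2 * v_w - 1) ^ 2 := by
    nlinarith [key, mul_pos (mul_pos hvu hvw) (sub_pos.mpr hR2)]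
  have hslt : s < 2 * v_w - 1 := by nlinarith [h1]
  have hspos : 0 < s := by
    rcases hs0.lt_or_eq with h | h
    · exact h
    · exfalso; rw [← h] at key; nlinarith
  refine ⟨?_, ?_, ?_, ?_, ?_⟩
  · field_simp
    linear_combination key
  · field_simp
    linear_combination key
  · have : 0 < 2 * v_w - 1 - s := by linarith
    positivity
  · have : 0 < 2 * v_w - 1 + s := by linarith
    positivity
  · have h3 : 0 < 1 / (2 * (1 - v_w)) := by positivity
    nlinarith

theorem two_positive_endemic_roots
    (v_w R0 : ℝ) (hv1 : 1 / 2 < v_w) (hv2 : v_w < 1)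
    (hR1 : 4 * (1 - v_w) * v_w < R0) (hR2 : R0 < 1) :
    let v_u := 1 - v_w
    let rp := (1 / (2 * v_u)) * (2 * v_w - 1 + Real.sqrt (1 - 4 * v_u * v_w / R0))
    let rm := (1 / (2 * v_u)) * (2 * v_w - 1 - Real.sqrt (1 - 4 * v_u * v_w / R0))
    ((v_u / v_w) * rp ^ 2 + (v_u / v_w - 1) * rp + (1 - R0) / R0 = 0) ∧
    ((v_u / v_w) * rm ^ 2 + (v_u / v_w - 1) * rm + (1 - R0) / R0 = 0) ∧
    0 < rm ∧ 0 < rp ∧ rm < rp := by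
  intro v_u rp rm
  have hR0 : 0 < R0 := by nlinarith
  have harg : (0:ℝ) ≤ 1 - 4 * (1 - v_w) * v_w / R0 := by
    rw [sub_nonneg, div_le_one hR0]; linarith
  exact aux_roots v_w R0 _ hv1 hv2 hR1 hR2 (Real.sqrt_nonneg _) (Real.sq_sqrt harg)
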